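/- Let n > 1 be an integer with exactly r distinct prime factors, and let A(n) be the adjacency matrix of the modified divisor prime graph G*_Dp(n). Then the rank of A(n) equals 2^r; equivalently, A(n) has exactly 2^r nonzero eigenvalues (with multiplicity), and 0 is an eigenvalue of multiplicity τ(n) − 2^r, where τ(n) is the number of divisors of n. -/

import Mathlib

open Finset Matrix

section aux
variable (Ω : Finset ℕ)

noncomputable def dM : Matrix {S // S ∈ Ω.powerset} {S // S ∈ Ω.powerset} ℝ :=
  fun S T => if Disjoint S.1 T.1 then 1 else 0

noncomputable def dN : Matrix {S // S ∈ Ω.powerset} {S // S ∈ Ω.powerset} ℝ :=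
  fun S T => if S.1 ∪ T.1 = Ω then (-1 : ℝ) ^ (S.1 ∩ T.1).card else 0

theorem dM_mul_dN : dM Ω * dN Ω = 1 := by
  classical
  ext S U
  have hS : S.1 ⊆ Ω := mem_powerset.mp S.2
  have hU : U.1 ⊆ Ω := mem_powerset.mp U.2
  simp only [Matrix.mul_apply, dM, dN, Matrix.one_apply]
  rw [Finset.sum_coe_sort Ω.powerset
    (fun T => (if Disjoint S.1 T then (1:ℝ) else 0) *
      (if T ∪ U.1 = Ω then (-1:ℝ) ^ (T ∩ U.1).card else 0))]
  simp only [ite_mul, one_mul, zero_mul, ← ite_and]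
  rw [Finset.sum_ite, Finset.sum_const_zero, add_zero]
  by_cases hSU : S.1 ⊆ U.1
  · have key : ∑ T ∈ Ω.powerset.filter (fun T => Disjoint S.1 T ∧ T ∪ U.1 = Ω),
        (-1:ℝ) ^ (T ∩ U.1).card = ∑ R ∈ (U.1 \ S.1).powerset, (-1:ℝ) ^ R.card := by
      refine Finset.sum_nbij' (fun T => T ∩ U.1) (fun R => R ∪ (Ω \ U.1)) ?_ ?_ ?_ ?_ ?_
      · intro T hT
        simp only [mem_filter, mem_powerset] at hT
        obtain ⟨hTΩ, hdisj, hunion⟩ := hT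
        rw [mem_powerset]
        intro x hx
        simp only [mem_inter] at hx
        simp only [mem_sdiff]
        exact ⟨hx.2, fun hxS => (disjoint_left.mp hdisj hxS) hx.1⟩
      · intro R hR
        rw [mem_powerset] at hR
        simp only [mem_filter, mem_powerset]
        refine ⟨?_, ?_, ?_⟩
        · exact union_subset (hR.trans ((sdiff_subset).trans hU)) (sdiff_subset)
        · rw [disjoint_union_right]
          constructor
          · exact disjoint_left.mpr fun x hxS hxR => (mem_sdiff.mp (hR hxR)).2 hxS
          · exact disjoint_left.mpr fun x hxS hxΩU => (mem_sdiff.mp hxΩU).2 (hSU hxS)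
        · rw [union_assoc, sdiff_union_self_eq_union, union_eq_left.mpr hU,
            union_eq_right.mpr (hR.trans (sdiff_subset.trans hU))]
      · intro T hT
        simp only [mem_filter, mem_powerset] at hT
        obtain ⟨hTΩ, hdisj, hunion⟩ := hT
        ext x
        simp only [mem_union, mem_inter, mem_sdiff]
        constructor
        · rintro (⟨hxT, _⟩ | ⟨hxΩ, hxU⟩)
          · exact hxT
          · have hx' : x ∈ T ∪ U.1 := by rw [hunion]; exact hxΩ
            rcases mem_union.mp hx' with h | h
            · exact h
            · exact absurd h hxU
        · intro hxT
          by_cases hxU : x ∈ U.1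
          · exact Or.inl ⟨hxT, hxU⟩
          · exact Or.inr ⟨hTΩ hxT, hxU⟩
      · intro R hR
        rw [mem_powerset] at hR
        ext x
        simp only [mem_inter, mem_union, mem_sdiff]
        constructor
        · rintro ⟨hL, hxU⟩
          rcases hL with h | ⟨_, h⟩
          · exact h
          · exact absurd hxU h
        · intro hxR
          exact ⟨Or.inl hxR, (mem_sdiff.mp (hR hxR)).1⟩
      · intro T hT
        rfl
    rw [key]
    have := Finset.sum_powerset_neg_one_pow_card (x := U.1 \ S.1)
    have hcast : ∑ R ∈ (U.1 \ S.1).powerset, (-1:ℝ) ^ R.card =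
        ((∑ R ∈ (U.1 \ S.1).powerset, (-1:ℤ) ^ R.card : ℤ) : ℝ) := by push_cast; ring_nf
    rw [hcast, this]
    by_cases h : S = U
    · subst h; simp
    · have : U.1 \ S.1 ≠ ∅ := by
        intro hempty
        exact h (Subtype.ext (subset_antisymm hSU (sdiff_eq_empty_iff_subset.mp hempty)))
      rw [if_neg this, if_neg h]; simp
  · have hempty : Ω.powerset.filter (fun T => Disjoint S.1 T ∧ T ∪ U.1 = Ω) = ∅ := by
      rw [filter_eq_empty_iff]
      rintro T hT ⟨hdisj, hunion⟩
      obtain ⟨p, hpS, hpU⟩ := not_subset.mp hSU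
      have hpΩ : p ∈ Ω := hS hpS
      rcases mem_union.mp (hunion ▸ hpΩ) with h | h
      · exact disjoint_left.mp hdisj hpS h
      · exact hpU h
    rw [hempty, Finset.sum_empty]
    have : S ≠ U := fun h => hSU (h ▸ subset_rfl)
    rw [if_neg this]

theorem dM_rank : (dM Ω).rank = 2 ^ Ω.card := by
  classical
  have h : IsUnit (dM Ω) :=
    ⟨⟨dM Ω, dN Ω, dM_mul_dN Ω, mul_eq_one_comm.mp (dM_mul_dN Ω)⟩, rfl⟩
  rw [Matrix.rank_of_isUnit _ h, Fintype.card_coe, card_powerset]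

end aux

/-- For `n > 1` with exactly `r` distinct prime factors, the rank of the adjacency
matrix of the modified divisor prime graph of `n` equals `2 ^ r` (equivalently, it has
exactly `2 ^ r` nonzero eigenvalues and `0` is an eigenvalue of multiplicity
`τ(n) - 2 ^ r`). -/
theorem rank_modifiedDivisorPrimeGraph (n : ℕ) (hn : 1 < n)
    (A : Matrix {d : ℕ // d ∈ n.divisors} {d : ℕ // d ∈ n.divisors} ℝ)
    (hA : ∀ u v : {d : ℕ // d ∈ n.divisors},
      A u v = if Nat.gcd u.1 v.1 = 1 then 1 else 0) :
    A.rank = 2 ^ n.primeFactors.card := by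
  classical
  have hn0 : n ≠ 0 := by omega
  set Ω := n.primeFactors with hΩ
  have hdvd0 : ∀ d : {d : ℕ // d ∈ n.divisors}, d.1 ≠ 0 :=
    fun d => (Nat.pos_of_mem_divisors d.2).ne'
  have hpf : ∀ d : {d : ℕ // d ∈ n.divisors}, d.1.primeFactors ∈ Ω.powerset := by
    intro d
    rw [mem_powerset]
    exact Nat.primeFactors_mono (Nat.mem_divisors.mp d.2).1 hn0
  -- A u v in terms of disjointness of prime factor sets
  have hA' : ∀ u v : {d : ℕ // d ∈ n.divisors},
      A u v = if Disjoint u.1.primeFactors v.1.primeFactors then 1 else 0 := by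
    intro u v
    rw [hA]
    congr 1
    rw [eq_iff_iff, ← Nat.coprime_iff_gcd_eq_one,
      ← Nat.disjoint_primeFactors (hdvd0 u) (hdvd0 v)]
  -- upper bound
  have hupper : A.rank ≤ 2 ^ Ω.card := by
    set B : Matrix {d : ℕ // d ∈ n.divisors} {S // S ∈ Ω.powerset} ℝ :=
      fun d S => if d.1.primeFactors = S.1 then 1 else 0 with hB
    set C : Matrix {S // S ∈ Ω.powerset} {d : ℕ // d ∈ n.divisors} ℝ :=
      fun S e => if Disjoint S.1 e.1.primeFactors then 1 else 0 with hC
    have hBC : A = B * C := by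
      ext u v
      rw [Matrix.mul_apply, hA' u v]
      rw [Fintype.sum_eq_single (⟨u.1.primeFactors, hpf u⟩ : {S // S ∈ Ω.powerset})]
      · simp [hB, hC]
      · intro S hS
        have : u.1.primeFactors ≠ S.1 := fun h => hS (Subtype.ext h.symm)
        simp [hB, this]
    calc A.rank = (B * C).rank := by rw [hBC]
      _ ≤ C.rank := Matrix.rank_mul_le_right B C
      _ ≤ Fintype.card {S // S ∈ Ω.powerset} := Matrix.rank_le_card_height C
      _ = 2 ^ Ω.card := by rw [Fintype.card_coe, card_powerset]
  -- lower bound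
  have hlower : 2 ^ Ω.card ≤ A.rank := by
    have hι : ∀ S : {S // S ∈ Ω.powerset}, (∏ p ∈ S.1, p) ∈ n.divisors := by
      intro S
      rw [Nat.mem_divisors]
      refine ⟨dvd_trans ?_ (Nat.prod_primeFactors_dvd n), hn0⟩
      exact Finset.prod_dvd_prod_of_subset _ _ _ (mem_powerset.mp S.2)
    set ι : {S // S ∈ Ω.powerset} → {d : ℕ // d ∈ n.divisors} :=
      fun S => ⟨∏ p ∈ S.1, p, hι S⟩ with hιdef
    have hιpf : ∀ S : {S // S ∈ Ω.powerset}, (ι S).1.primeFactors = S.1 := by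
      intro S
      exact Nat.primeFactors_prod (fun p hp => Nat.prime_of_mem_primeFactors
        (mem_powerset.mp S.2 hp))
    set E : Matrix {S // S ∈ Ω.powerset} {d : ℕ // d ∈ n.divisors} ℝ :=
      fun S d => if d = ι S then 1 else 0 with hE
    have hM : dM Ω = E * (A * Eᵀ) := by
      ext S T
      rw [Matrix.mul_apply]
      rw [Fintype.sum_eq_single (ι S)]
      · have : (A * Eᵀ) (ι S) T = A (ι S) (ι T) := by
          rw [Matrix.mul_apply]
          rw [Fintype.sum_eq_single (ι T)]
          · simp [hE, Matrix.transpose_apply, Matrix.transpose]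
          · intro e he
            simp [hE, Matrix.transpose_apply, Matrix.transpose, he]
        rw [this, hA', hιpf, hιpf]
        simp [dM, hE]
      · intro d hd
        simp [hE, hd]
    calc 2 ^ Ω.card = (dM Ω).rank := (dM_rank Ω).symm
      _ = (E * (A * Eᵀ)).rank := by rw [hM]
      _ ≤ (A * Eᵀ).rank := Matrix.rank_mul_le_right _ _
      _ ≤ A.rank := Matrix.rank_mul_le_left _ _
  exact le_antisymm hupper hlower
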